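/- arXiv:2305.09634 — 2 statements merged into one kernel-verified Lean document; each statement's English description precedes it below -/
import Mathlib

section
/- For every strategy σ ∈ Σ^Opt and every state s₀ ∈ S', Pr'_{σ,s₀}(◊T) = Pr_{σ,s₀}(◊T)/Val(s₀). -/
open scoped ENNReal NNReal Classical
open Filter

universe u v

variable {S : Type u} {A : Type v}

/-- A finite MDP: `P s a = some d` means action `a` is legal at `s` and `d` is a
probability distribution on `S`; every state has at least one legal action. -/
structure MDP (S : Type u) (A : Type v) [Fintype S] [Fintype A] where
  P : S → A → Option (S → NNReal)
  sum_one : ∀ s a d, P s a = some d → (∑ s', d s') = 1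
  exists_legal : ∀ s, ∃ a, (P s a).isSome

/-- Last state of an alternating path starting at `s` with steps `steps`. -/
def lastState : S → List (A × S) → S
  | s, [] => s
  | _, (_, s') :: rest => lastState s' rest

/-- A finite path: a start state together with a list of (action, next-state) steps. -/
structure FPath (S : Type u) (A : Type v) where
  start : S
  steps : List (A × S)

namespace FPath

def last (ρ : FPath S A) : S := lastState ρ.start ρ.steps

def states (ρ : FPath S A) : List S := ρ.start :: ρ.steps.map Prod.snd

def length (ρ : FPath S A) : ℕ := ρ.steps.length

end FPath

/-- A (raw) strategy: maps each finite path (start state + steps) to a distribution on actions. -/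
def Strat (S : Type u) (A : Type v) := S → List (A × S) → A → ℝ≥0∞

/-- Shifted strategy `σ_ρ` for `ρ = (s₀, pre)`: `σ_ρ(ρ') = σ(ρ·ρ')`. -/
def shiftStrat (σ : Strat S A) (s₀ : S) (pre : List (A × S)) : Strat S A :=
  fun _ steps a => σ s₀ (pre ++ steps) a

/-- Generic cylinder weight (product of strategy- and transition-probabilities along the
steps), relative to a transition kernel `p`. The accumulator `pre` is the path-prefix so far. -/
noncomputable def wtP (p : S → A → S → ℝ≥0∞) (σ : Strat S A) (s₀ : S) :
    List (A × S) → List (A × S) → ℝ≥0∞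
  | _, [] => 1
  | pre, (a, s') :: rest =>
      σ s₀ pre a * p (lastState s₀ pre) a s' * wtP p σ s₀ (pre ++ [(a, s')]) rest
  termination_by pre l => l.length

/-- Generic cylinder probability of path `ρ` from start state `s`, kernel `p`. -/
noncomputable def cylProbP (p : S → A → S → ℝ≥0∞) (σ : Strat S A) (s : S) (ρ : FPath S A) :
    ℝ≥0∞ :=
  if ρ.start = s then wtP p σ ρ.start [] ρ.steps else 0

namespace MDP

variable [Fintype S] [Fintype A]

def legal (M : MDP S A) (s : S) (a : A) : Prop := (M.P s a).isSome

noncomputable def prob (M : MDP S A) (s : S) (a : A) (s' : S) : ℝ≥0∞ :=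
  (M.P s a).elim 0 fun d => (d s' : ℝ≥0∞)

/-- `ρ` is a finite path of `M` from `s`: every action legal, every transition of
positive probability. -/
def IsPathFrom (M : MDP S A) : S → List (A × S) → Prop
  | _, [] => True
  | s, (a, s') :: rest => M.legal s a ∧ 0 < M.prob s a s' ∧ M.IsPathFrom s' rest

def IsPath (M : MDP S A) (ρ : FPath S A) : Prop := M.IsPathFrom ρ.start ρ.steps

/-- `σ` is a strategy: at every finite path it gives a probability distribution on actions
supported on actions legal at the last state. -/
def IsStrategy (M : MDP S A) (σ : Strat S A) : Prop :=
  ∀ s steps, M.IsPathFrom s steps →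
    (∑ a, σ s steps a) = 1 ∧ ∀ a, 0 < σ s steps a → M.legal (lastState s steps) a

/-- Cylinder probability `P_{σ,s}(ρ)` in `M`. -/
noncomputable def cylProb (M : MDP S A) (σ : Strat S A) (s : S) (ρ : FPath S A) : ℝ≥0∞ :=
  cylProbP M.prob σ s ρ

/-- `T` is a set of sink states: each `t ∈ T` has exactly one legal action, leading back
to `t` with probability `1`. -/
def SinkSet (M : MDP S A) (T : Set S) : Prop :=
  ∀ t ∈ T, (∃! a, M.legal t a) ∧ ∀ a, M.legal t a → M.prob t a t = 1

/-- Generic pruned finite-path predicate: all states have positive value `v` and every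
step uses an `opt` state-action pair with positive transition probability in `M`. -/
def IsPathFromPruned (M : MDP S A) (v : S → ℝ≥0∞) (opt : S → A → Prop) :
    S → List (A × S) → Prop
  | s, [] => 0 < v s
  | s, (a, s') :: rest =>
      0 < v s ∧ opt s a ∧ 0 < M.prob s a s' ∧ M.IsPathFromPruned v opt s' rest

/-! ### Reachability -/

/-- `ρ` is a `T`-hitting path: its last state lies in `T` and no other state does. -/
def HitsFirst (T : Set S) (ρ : FPath S A) : Prop :=
  ρ.last ∈ T ∧ ∀ x ∈ ρ.states.dropLast, x ∉ T

/-- `Pr_{σ,s}(◊T)`: sum over `T`-hitting paths starting at `s` of their cylinder probabilities. -/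
noncomputable def prReach (M : MDP S A) (σ : Strat S A) (s : S) (T : Set S) : ℝ≥0∞ :=
  ∑' ρ : {ρ : FPath S A // M.IsPath ρ ∧ HitsFirst T ρ ∧ ρ.start = s}, M.cylProb σ s ρ.1

/-- `Val(s)` for reachability: supremum over strategies of `Pr_{σ,s}(◊T)`. -/
noncomputable def reachVal (M : MDP S A) (T : Set S) (s : S) : ℝ≥0∞ :=
  ⨆ (σ : Strat S A) (_ : M.IsStrategy σ), M.prReach σ s T

/-- `(s,a) ∈ Opt` for reachability. -/
def OptR (M : MDP S A) (T : Set S) (s : S) (a : A) : Prop :=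
  M.legal s a ∧ M.reachVal T s = ∑ s', M.prob s a s' * M.reachVal T s'

/-- `σ ∈ Σ^Opt` for reachability. -/
def SigmaOptR (M : MDP S A) (T : Set S) (σ : Strat S A) : Prop :=
  ∀ s steps, M.IsPathFrom s steps → ∀ a, 0 < σ s steps a → M.OptR T (lastState s steps) a

/-- Transition probabilities of the pruned MDP `M'` for reachability. -/
noncomputable def probR' (M : MDP S A) (T : Set S) (s : S) (a : A) (s' : S) : ℝ≥0∞ :=
  if M.OptR T s a ∧ 0 < M.reachVal T s then
    M.prob s a s' * M.reachVal T s' / M.reachVal T s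
  else 0

/-- `ρ` is a finite path of the pruned MDP `M'` (reachability version). -/
def IsPathR' (M : MDP S A) (T : Set S) (ρ : FPath S A) : Prop :=
  M.IsPathFromPruned (M.reachVal T) (M.OptR T) ρ.start ρ.steps

/-- Cylinder probability `P'_{σ,s}(ρ)` in the pruned MDP `M'` (reachability version). -/
noncomputable def cylProbR' (M : MDP S A) (T : Set S) (σ : Strat S A) (s : S) (ρ : FPath S A) :
    ℝ≥0∞ :=
  cylProbP (M.probR' T) σ s ρ

/-- `Pr'_{σ,s}(◊T)` in the pruned MDP `M'`. -/
noncomputable def prReach' (M : MDP S A) (σ : Strat S A) (s : S) (T : Set S) : ℝ≥0∞ :=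
  ∑' ρ : {ρ : FPath S A // M.IsPathR' T ρ ∧ HitsFirst T ρ ∧ ρ.start = s},
    M.cylProbR' T σ s ρ.1

/-- Probability of hitting `T` for the first time in exactly `r` steps, in `M`. -/
noncomputable def hitLenProb (M : MDP S A) (σ : Strat S A) (s : S) (T : Set S) (r : ℕ) :
    ℝ≥0∞ :=
  ∑' ρ : {ρ : FPath S A // M.IsPath ρ ∧ HitsFirst T ρ ∧ ρ.start = s ∧ ρ.length = r},
    M.cylProb σ s ρ.1

/-- Probability of hitting `T` for the first time in exactly `r` steps, in `M'`. -/
noncomputable def hitLenProb' (M : MDP S A) (σ : Strat S A) (s : S) (T : Set S) (r : ℕ) :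
    ℝ≥0∞ :=
  ∑' ρ : {ρ : FPath S A // M.IsPathR' T ρ ∧ HitsFirst T ρ ∧ ρ.start = s ∧ ρ.length = r},
    M.cylProbR' T σ s ρ.1

/-- Conditional expected length to target `E_{σ,s}(len_T | ◊T)`. -/
noncomputable def condExpLen (M : MDP S A) (σ : Strat S A) (s : S) (T : Set S) : ℝ≥0∞ :=
  ∑' r : ℕ, (r : ℝ≥0∞) * M.hitLenProb σ s T r / M.prReach σ s T

/-- Expected length to target in `M'`, `E'_{σ,s}(len_T)`; `∞` unless `Pr'_{σ,s}(◊T) = 1`. -/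
noncomputable def expLen' (M : MDP S A) (σ : Strat S A) (s : S) (T : Set S) : ℝ≥0∞ :=
  if M.prReach' σ s T = 1 then ∑' r : ℕ, (r : ℝ≥0∞) * M.hitLenProb' σ s T r else ⊤

/-! ### Safety -/

/-- `Safe_n(σ,s)`: probability of the paths of length `n` from `s` avoiding `Bad`. -/
noncomputable def safeN (M : MDP S A) (σ : Strat S A) (s : S) (Bad : Set S) (n : ℕ) : ℝ≥0∞ :=
  ∑' ρ : {ρ : FPath S A //
      M.IsPath ρ ∧ ρ.start = s ∧ ρ.length = n ∧ ∀ x ∈ ρ.states, x ∉ Bad},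
    M.cylProb σ s ρ.1

/-- `Pr_{σ,s}(□¬Bad) := ⨅ n, Safe_n(σ,s)`. -/
noncomputable def prSafe (M : MDP S A) (σ : Strat S A) (s : S) (Bad : Set S) : ℝ≥0∞ :=
  ⨅ n : ℕ, M.safeN σ s Bad n

/-- `Val(s)` for safety: supremum over strategies of `Pr_{σ,s}(□¬Bad)`. -/
noncomputable def safeVal (M : MDP S A) (Bad : Set S) (s : S) : ℝ≥0∞ :=
  ⨆ (σ : Strat S A) (_ : M.IsStrategy σ), M.prSafe σ s Bad

/-- `(s,a) ∈ Opt` for safety. -/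
def OptS (M : MDP S A) (Bad : Set S) (s : S) (a : A) : Prop :=
  M.legal s a ∧ M.safeVal Bad s = ∑ s', M.prob s a s' * M.safeVal Bad s'

/-- `σ ∈ Σ^Opt` for safety. -/
def SigmaOptS (M : MDP S A) (Bad : Set S) (σ : Strat S A) : Prop :=
  ∀ s steps, M.IsPathFrom s steps → ∀ a, 0 < σ s steps a → M.OptS Bad (lastState s steps) a

/-- `UPreⁱ(Bad)`. -/
def UPre (M : MDP S A) (Bad : Set S) : ℕ → Set S
  | 0 => Bad
  | i + 1 => {s | ∀ a, M.legal s a → ∃ s' ∈ M.UPre Bad i, 0 < M.prob s a s'}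

/-- `Good := S \ UPre*(Bad)`. -/
def GoodSet (M : MDP S A) (Bad : Set S) : Set S := (⋃ i, M.UPre Bad i)ᶜ

/-- `V := S \ (Good ∪ Bad)`. -/
def VSet (M : MDP S A) (Bad : Set S) : Set S := (M.GoodSet Bad ∪ Bad)ᶜ

/-- `Pr_{σ,s}(GoodCyl(ρ)) := P_{σ,s}(ρ) · Pr_{σ_ρ, last(ρ)}(□¬Bad)`. -/
noncomputable def goodCyl (M : MDP S A) (σ : Strat S A) (s : S) (Bad : Set S) (ρ : FPath S A) :
    ℝ≥0∞ :=
  M.cylProb σ s ρ * M.prSafe (shiftStrat σ ρ.start ρ.steps) ρ.last Bad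

/-- Transition probabilities of the pruned MDP `M'` for safety. -/
noncomputable def probS' (M : MDP S A) (Bad : Set S) (s : S) (a : A) (s' : S) : ℝ≥0∞ :=
  if M.OptS Bad s a ∧ 0 < M.safeVal Bad s then
    M.prob s a s' * M.safeVal Bad s' / M.safeVal Bad s
  else 0

/-- `ρ` is a finite path of the pruned MDP `M'` (safety version). -/
def IsPathS' (M : MDP S A) (Bad : Set S) (ρ : FPath S A) : Prop :=
  M.IsPathFromPruned (M.safeVal Bad) (M.OptS Bad) ρ.start ρ.steps

/-- Cylinder probability `P'_{σ,s}(ρ)` in the pruned MDP `M'` (safety version). -/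
noncomputable def cylProbS' (M : MDP S A) (Bad : Set S) (σ : Strat S A) (s : S)
    (ρ : FPath S A) : ℝ≥0∞ :=
  cylProbP (M.probS' Bad) σ s ρ

end MDP

/-- `Reward_n(ρ) = ∑_{i<n} R(sᵢ, aᵢ)` for `ρ` starting at `s` with steps `steps`. -/
def rewardOf (R : S → A → ℝ) : S → List (A × S) → ℝ
  | _, [] => 0
  | s, (a, s') :: rest => R s a + rewardOf R s' rest

namespace MDP

variable [Fintype S] [Fintype A]

/-- `E'_{σ,s}(Reward_n)` in the pruned MDP `M'` (safety version). -/
noncomputable def expRewN' (M : MDP S A) (Bad : Set S) (R : S → A → ℝ) (σ : Strat S A)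
    (s : S) (n : ℕ) : ℝ :=
  ∑' ρ : {ρ : FPath S A // M.IsPathS' Bad ρ ∧ ρ.start = s ∧ ρ.length = n},
    (M.cylProbS' Bad σ s ρ.1).toReal * rewardOf R ρ.1.start ρ.1.steps

/-- `E'_{σ,s}(MP) := liminf_n (1/n)·E'_{σ,s}(Reward_n)`. -/
noncomputable def mp' (M : MDP S A) (Bad : Set S) (R : S → A → ℝ) (σ : Strat S A) (s : S) :
    ℝ :=
  Filter.atTop.liminf fun n : ℕ => M.expRewN' Bad R σ s n / n

/-- `E_{σ,s}(Reward_n | □¬Bad)`. -/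
noncomputable def condExpRewN (M : MDP S A) (Bad : Set S) (R : S → A → ℝ) (σ : Strat S A)
    (s : S) (n : ℕ) : ℝ :=
  (∑' ρ : {ρ : FPath S A // M.IsPath ρ ∧ ρ.start = s ∧ ρ.length = n},
    (M.goodCyl σ s Bad ρ.1).toReal * rewardOf R ρ.1.start ρ.1.steps) /
  (M.prSafe σ s Bad).toReal

/-- `E_{σ,s}(MP | □¬Bad) := liminf_n (1/n)·E_{σ,s}(Reward_n | □¬Bad)`. -/
noncomputable def condMP (M : MDP S A) (Bad : Set S) (R : S → A → ℝ) (σ : Strat S A)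
    (s : S) : ℝ :=
  Filter.atTop.liminf fun n : ℕ => M.condExpRewN Bad R σ s n / n

end MDP


section AuxStmt3

open MDP

lemma lastState_append' (s : S) (l₁ l₂ : List (A × S)) :
    lastState s (l₁ ++ l₂) = lastState (lastState s l₁) l₂ := by
  induction l₁ generalizing s with
  | nil => rfl
  | cons x r ih => cases x with | mk a s' => simpa [lastState] using ih s'

lemma wtP_nil' (p : S → A → S → ℝ≥0∞) (σ : Strat S A) (s₀ : S) (pre : List (A × S)) :
    wtP p σ s₀ pre [] = 1 := by rw [wtP]

lemma wtP_cons' (p : S → A → S → ℝ≥0∞) (σ : Strat S A) (s₀ : S) (pre : List (A × S))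
    (a : A) (s' : S) (rest : List (A × S)) :
    wtP p σ s₀ pre ((a, s') :: rest) =
      σ s₀ pre a * p (lastState s₀ pre) a s' * wtP p σ s₀ (pre ++ [(a, s')]) rest := by
  rw [wtP]

variable [Fintype S] [Fintype A]

lemma MDP.isPathFrom_append_singleton (M : MDP S A) {s : S} {pre : List (A × S)} {a : A} {s' : S}
    (h : M.IsPathFrom s pre) (hl : M.legal (lastState s pre) a)
    (hp : 0 < M.prob (lastState s pre) a s') :
    M.IsPathFrom s (pre ++ [(a, s')]) := by
  induction pre generalizing s with
  | nil => exact ⟨hl, hp, trivial⟩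
  | cons x r ih =>
      cases x with | mk b t =>
      obtain ⟨h1, h2, h3⟩ := h
      exact ⟨h1, h2, ih h3 hl hp⟩

lemma MDP.isPathFrom_of_pruned (M : MDP S A) {T : Set S} :
    ∀ (l : List (A × S)) (s : S),
      M.IsPathFromPruned (M.reachVal T) (M.OptR T) s l → M.IsPathFrom s l := by
  intro l
  induction l with
  | nil => intro s _; trivial
  | cons x r ih =>
      cases x with | mk a s' =>
      intro s h
      obtain ⟨_, hopt, hp, hrest⟩ := h
      exact ⟨hopt.1, hp, ih s' hrest⟩

lemma MDP.prReach_of_mem_target (M : MDP S A) {T : Set S} {t : S} (ht : t ∈ T)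
    (σ' : Strat S A) : M.prReach σ' t T = 1 := by
  classical
  have hsteps : ∀ ρ : FPath S A, HitsFirst T ρ → ρ.start = t → ρ.steps = [] := by
    intro ρ hhit hst
    cases hρ : ρ.steps with
    | nil => rfl
    | cons x r =>
        exfalso
        apply hhit.2 ρ.start _ (hst ▸ ht)
        have : ρ.states = ρ.start :: (x.2 :: (r.map Prod.snd)) := by
          simp [FPath.states, hρ]
        rw [this, List.dropLast_cons_of_ne_nil (by simp)]
        exact List.mem_cons_self
  have hy₀mem : M.IsPath (⟨t, []⟩ : FPath S A) ∧ HitsFirst T (⟨t, []⟩ : FPath S A) ∧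
      (⟨t, []⟩ : FPath S A).start = t := by
    refine ⟨trivial, ⟨ht, ?_⟩, rfl⟩
    intro x hx
    simp [FPath.states] at hx
  let y₀ : {ρ : FPath S A // M.IsPath ρ ∧ HitsFirst T ρ ∧ ρ.start = t} := ⟨⟨t, []⟩, hy₀mem⟩
  have key : ∀ b : {ρ : FPath S A // M.IsPath ρ ∧ HitsFirst T ρ ∧ ρ.start = t}, b = y₀ := by
    rintro ⟨⟨st, steps⟩, hP, hH, hst⟩
    have h1 : steps = [] := hsteps ⟨st, steps⟩ hH hst
    subst h1
    have h2 : st = t := hst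
    subst h2
    rfl
  have : M.prReach σ' t T = M.cylProb σ' t y₀.1 := by
    refine tsum_eq_single y₀ ?_
    intro b hb
    exact absurd (key b) hb
  rw [this]
  simp [MDP.cylProb, cylProbP, y₀, wtP_nil']

lemma MDP.reachVal_of_mem_target (M : MDP S A) {T : Set S} {t : S} (ht : t ∈ T)
    {σ : Strat S A} (hσ : M.IsStrategy σ) : M.reachVal T t = 1 := by
  refine le_antisymm (iSup₂_le fun σ' _ => (M.prReach_of_mem_target ht σ').le) ?_
  exact le_iSup₂_of_le σ hσ (M.prReach_of_mem_target ht σ).ge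

/-- Value-zero propagation along σ-positive paths for σ ∈ Σ^Opt. -/
lemma MDP.val_zero_prop (M : MDP S A) {T : Set S} {σ : Strat S A}
    (hopt : M.SigmaOptR T σ) (s₀ : S) :
    ∀ (rest pre : List (A × S)), M.IsPathFrom s₀ pre →
      wtP M.prob σ s₀ pre rest ≠ 0 →
      M.reachVal T (lastState s₀ pre) = 0 →
      M.reachVal T (lastState s₀ (pre ++ rest)) = 0 := by
  intro rest
  induction rest with
  | nil => intro pre _ _ h; simpa using h
  | cons x r ih =>
      cases x with | mk a s' =>
      intro pre hpre hw h0
      rw [wtP_cons'] at hw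
      have hσa : σ s₀ pre a ≠ 0 := fun h => hw (by simp [h])
      have hpa : M.prob (lastState s₀ pre) a s' ≠ 0 := fun h => hw (by simp [h])
      have hwr : wtP M.prob σ s₀ (pre ++ [(a, s')]) r ≠ 0 := fun h => hw (by simp [h])
      have hOpt : M.OptR T (lastState s₀ pre) a :=
        hopt s₀ pre hpre a (pos_iff_ne_zero.mpr hσa)
      have hterm : M.prob (lastState s₀ pre) a s' * M.reachVal T s' = 0 := by
        have hsum : (∑ s'', M.prob (lastState s₀ pre) a s'' * M.reachVal T s'') = 0 := by
          rw [← hOpt.2]; exact h0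
        exact (Finset.sum_eq_zero_iff.mp hsum) s' (Finset.mem_univ s')
      have hval' : M.reachVal T s' = 0 := by
        rcases mul_eq_zero.mp hterm with h | h
        · exact absurd h hpa
        · exact h
      have hpre' : M.IsPathFrom s₀ (pre ++ [(a, s')]) :=
        M.isPathFrom_append_singleton hpre hOpt.1 (pos_iff_ne_zero.mpr hpa)
      have hlast' : lastState s₀ (pre ++ [(a, s')]) = s' := by
        rw [lastState_append']; rfl
      have := ih (pre ++ [(a, s')]) hpre' hwr (by rw [hlast']; exact hval')
      rwa [List.append_cons pre (a, s') r]

/-- σ-positive paths between positive-value states are pruned paths. -/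
lemma MDP.pruned_of_wt_ne_zero (M : MDP S A) {T : Set S} {σ : Strat S A}
    (hopt : M.SigmaOptR T σ) (s₀ : S) :
    ∀ (rest pre : List (A × S)), M.IsPathFrom s₀ pre →
      wtP M.prob σ s₀ pre rest ≠ 0 →
      0 < M.reachVal T (lastState s₀ pre) →
      0 < M.reachVal T (lastState s₀ (pre ++ rest)) →
      M.IsPathFromPruned (M.reachVal T) (M.OptR T) (lastState s₀ pre) rest := by
  intro rest
  induction rest with
  | nil => intro pre _ _ h _; exact h
  | cons x r ih =>
      cases x with | mk a s' =>
      intro pre hpre hw h0 hend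
      rw [wtP_cons'] at hw
      have hσa : σ s₀ pre a ≠ 0 := fun h => hw (by simp [h])
      have hpa : M.prob (lastState s₀ pre) a s' ≠ 0 := fun h => hw (by simp [h])
      have hwr : wtP M.prob σ s₀ (pre ++ [(a, s')]) r ≠ 0 := fun h => hw (by simp [h])
      have hOpt : M.OptR T (lastState s₀ pre) a :=
        hopt s₀ pre hpre a (pos_iff_ne_zero.mpr hσa)
      have hpre' : M.IsPathFrom s₀ (pre ++ [(a, s')]) :=
        M.isPathFrom_append_singleton hpre hOpt.1 (pos_iff_ne_zero.mpr hpa)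
      have hlast' : lastState s₀ (pre ++ [(a, s')]) = s' := by
        rw [lastState_append']; rfl
      have hendeq : lastState s₀ ((pre ++ [(a, s')]) ++ r) =
          lastState s₀ (pre ++ (a, s') :: r) := by
        rw [← List.append_cons pre (a, s') r]
      have hval' : 0 < M.reachVal T s' := by
        rcases eq_or_lt_of_le (zero_le : 0 ≤ M.reachVal T s') with h | h
        · exfalso
          have := M.val_zero_prop hopt s₀ r (pre ++ [(a, s')]) hpre' hwr
            (by rw [hlast']; exact h.symm)
          rw [hendeq] at this
          exact hend.ne' this
        · exact h
      have hrest := ih (pre ++ [(a, s')]) hpre' hwr (by rw [hlast']; exact hval')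
        (by rw [hendeq]; exact hend)
      rw [hlast'] at hrest
      exact ⟨h0, hOpt, pos_iff_ne_zero.mpr hpa, hrest⟩

/-- Telescoping identity between pruned and original cylinder weights. -/
lemma MDP.wt_telescope (M : MDP S A) {T : Set S} (σ : Strat S A) (s₀ : S) :
    ∀ (rest pre : List (A × S)),
      M.IsPathFromPruned (M.reachVal T) (M.OptR T) (lastState s₀ pre) rest →
      M.reachVal T (lastState s₀ pre) ≠ ⊤ →
      wtP (M.probR' T) σ s₀ pre rest * M.reachVal T (lastState s₀ pre)
        = wtP M.prob σ s₀ pre rest * M.reachVal T (lastState s₀ (pre ++ rest)) := by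
  intro rest
  induction rest with
  | nil => intro pre _ _; simp [wtP_nil']
  | cons x r ih =>
      cases x with | mk a s' =>
      intro pre hpr htop
      obtain ⟨hVs, hopta, hps, hrest⟩ := hpr
      set s := lastState s₀ pre with hs
      have hlast' : lastState s₀ (pre ++ [(a, s')]) = s' := by
        rw [lastState_append']; rfl
      -- successor value is finite
      have htop' : M.reachVal T s' ≠ ⊤ := by
        intro hV'
        have hsum : (∑ s'', M.prob s a s'' * M.reachVal T s'') = ⊤ := by
          apply ENNReal.sum_eq_top.mpr
          exact ⟨s', Finset.mem_univ s', by rw [hV', ENNReal.mul_top hps.ne']⟩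
        exact htop (by rw [hopta.2, hsum])
      have hd : M.probR' T s a s' * M.reachVal T s
          = M.prob s a s' * M.reachVal T s' := by
        rw [MDP.probR', if_pos ⟨hopta, hVs⟩]
        exact ENNReal.div_mul_cancel hVs.ne' htop
      have ihr := ih (pre ++ [(a, s')])
        (by rw [hlast']; exact hrest) (by rw [hlast']; exact htop')
      rw [hlast'] at ihr
      have hendeq : lastState s₀ ((pre ++ [(a, s')]) ++ r) =
          lastState s₀ (pre ++ (a, s') :: r) := by
        rw [← List.append_cons pre (a, s') r]
      rw [hendeq] at ihr
      rw [wtP_cons', wtP_cons', ← hs]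
      calc σ s₀ pre a * M.probR' T s a s' * wtP (M.probR' T) σ s₀ (pre ++ [(a, s')]) r
            * M.reachVal T s
          = σ s₀ pre a * (M.probR' T s a s' * M.reachVal T s)
            * wtP (M.probR' T) σ s₀ (pre ++ [(a, s')]) r := by ring
        _ = σ s₀ pre a * (M.prob s a s' * M.reachVal T s')
            * wtP (M.probR' T) σ s₀ (pre ++ [(a, s')]) r := by rw [hd]
        _ = σ s₀ pre a * M.prob s a s'
            * (wtP (M.probR' T) σ s₀ (pre ++ [(a, s')]) r * M.reachVal T s') := by ring
        _ = σ s₀ pre a * M.prob s a s'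
            * (wtP M.prob σ s₀ (pre ++ [(a, s')]) r
              * M.reachVal T (lastState s₀ (pre ++ (a, s') :: r))) := by rw [ihr]
        _ = σ s₀ pre a * M.prob s a s' * wtP M.prob σ s₀ (pre ++ [(a, s')]) r
            * M.reachVal T (lastState s₀ (pre ++ (a, s') :: r)) := by ring

end AuxStmt3


/-- for `σ ∈ Σ^Opt` and `s₀ ∈ S'`, `Pr'_{σ,s₀}(◊T) = Pr_{σ,s₀}(◊T)/Val(s₀)`. -/
theorem stmt3 {S : Type u} {A : Type v} [Fintype S] [Fintype A] [Nonempty S] [Nonempty A]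
    (M : MDP S A) (T : Set S) (hT : M.SinkSet T)
    (σ : Strat S A) (hσ : M.IsStrategy σ) (hopt : M.SigmaOptR T σ)
    (s₀ : S) (hs₀ : 0 < M.reachVal T s₀) :
    M.prReach' σ s₀ T = M.prReach σ s₀ T / M.reachVal T s₀ := by
  classical
  by_cases htop : M.reachVal T s₀ = ⊤
  · -- The value at `s₀` is infinite: both sides vanish.
    have hs₀T : s₀ ∉ T := by
      intro h
      rw [M.reachVal_of_mem_target h hσ] at htop
      exact (by norm_num : (1 : ℝ≥0∞) ≠ ⊤) htop
    have hL : M.prReach' σ s₀ T = 0 := by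
      rw [MDP.prReach']
      apply ENNReal.tsum_eq_zero.mpr
      rintro ⟨ρ, hP', hH, hst⟩
      cases hρ : ρ.steps with
      | nil =>
          exfalso
          apply hs₀T
          have hl : ρ.last = ρ.start := by
            rw [FPath.last, hρ]; rfl
          rw [← hst, ← hl]
          exact hH.1
      | cons x r =>
          cases x with | mk a s' =>
          simp only [MDP.cylProbR', cylProbP, if_pos hst]
          rw [hρ, wtP_cons']
          have hz : M.probR' T (lastState ρ.start ([] : List (A × S))) a s' = 0 := by
            show M.probR' T ρ.start a s' = 0
            rw [MDP.probR', hst]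
            split
            · rw [htop, ENNReal.div_top]
            · rfl
          rw [hz, mul_zero, zero_mul]
    rw [hL, htop, ENNReal.div_top]
  · -- Main case: the value at `s₀` is finite and positive.
    set X : Set (FPath S A) := {ρ | M.IsPath ρ ∧ MDP.HitsFirst T ρ ∧ ρ.start = s₀} with hX
    set X' : Set (FPath S A) := {ρ | M.IsPathR' T ρ ∧ MDP.HitsFirst T ρ ∧ ρ.start = s₀} with hX'
    -- value 1 at the last state of hitting paths
    have hValLast : ∀ ρ : FPath S A, MDP.HitsFirst T ρ → M.reachVal T ρ.last = 1 :=
      fun ρ h => M.reachVal_of_mem_target h.1 hσ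
    -- (a) pointwise identity on X'
    have hpt : ∀ ρ ∈ X', M.cylProbR' T σ s₀ ρ =
        M.cylProb σ s₀ ρ / M.reachVal T s₀ := by
      rintro ρ ⟨hP', hH, hst⟩
      have hpruned : M.IsPathFromPruned (M.reachVal T) (M.OptR T)
          (lastState s₀ ([] : List (A × S))) ρ.steps := by
        show M.IsPathFromPruned (M.reachVal T) (M.OptR T) s₀ ρ.steps
        rw [← hst]; exact hP'
      have htel := M.wt_telescope σ s₀ ρ.steps [] hpruned
        (by show M.reachVal T s₀ ≠ ⊤; exact htop)
      have hlaste : lastState s₀ ([] ++ ρ.steps) = ρ.last := by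
        rw [List.nil_append, FPath.last, hst]
      rw [hlaste, hValLast ρ hH, mul_one] at htel
      rw [MDP.cylProbR', MDP.cylProb, cylProbP, cylProbP, if_pos hst, if_pos hst]
      refine (ENNReal.eq_div_iff hs₀.ne' htop).mpr ?_
      rw [mul_comm, hst]
      simpa [lastState] using htel
    -- (b) cylProb vanishes on X \ X'
    have hvan : ∀ ρ ∈ X, ρ ∉ X' → M.cylProb σ s₀ ρ = 0 := by
      rintro ρ ⟨hP, hH, hst⟩ hnot
      by_contra h0
      apply hnot
      refine ⟨?_, hH, hst⟩
      have hw : wtP M.prob σ ρ.start [] ρ.steps ≠ 0 := by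
        rw [MDP.cylProb, cylProbP, if_pos hst] at h0
        exact h0
      rw [hst] at hw
      have := M.pruned_of_wt_ne_zero hopt s₀ ρ.steps [] trivial hw
        (by show 0 < M.reachVal T s₀; exact hs₀)
        (by rw [show lastState s₀ ([] ++ ρ.steps) = ρ.last by
              rw [List.nil_append, FPath.last, hst]]
            rw [hValLast ρ hH]; norm_num)
      show M.IsPathFromPruned (M.reachVal T) (M.OptR T) ρ.start ρ.steps
      rw [hst]
      exact this
    -- (c) X' ⊆ X
    have hsub : X' ⊆ X := by
      rintro ρ ⟨hP', hH, hst⟩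
      exact ⟨M.isPathFrom_of_pruned ρ.steps ρ.start hP', hH, hst⟩
    -- rewrite both tsums via indicators
    have h1 : M.prReach' σ s₀ T =
        ∑' ρ : FPath S A, X'.indicator (M.cylProbR' T σ s₀) ρ := tsum_subtype X' _
    have h2 : M.prReach σ s₀ T =
        ∑' ρ : FPath S A, X.indicator (M.cylProb σ s₀) ρ := tsum_subtype X _
    have hind1 : X'.indicator (M.cylProbR' T σ s₀) =
        fun ρ => X'.indicator (M.cylProb σ s₀) ρ * (M.reachVal T s₀)⁻¹ := by
      funext ρ
      by_cases h : ρ ∈ X'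
      · rw [Set.indicator_of_mem h, Set.indicator_of_mem h, hpt ρ h, div_eq_mul_inv]
      · rw [Set.indicator_of_notMem h, Set.indicator_of_notMem h, zero_mul]
    have hind2 : X'.indicator (M.cylProb σ s₀) = X.indicator (M.cylProb σ s₀) := by
      funext ρ
      by_cases h : ρ ∈ X'
      · rw [Set.indicator_of_mem h, Set.indicator_of_mem (hsub h)]
      · rw [Set.indicator_of_notMem h]
        by_cases h2 : ρ ∈ X
        · rw [Set.indicator_of_mem h2, hvan ρ h2 h]
        · rw [Set.indicator_of_notMem h2]
    rw [h1, h2]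
    calc (∑' ρ : FPath S A, X'.indicator (M.cylProbR' T σ s₀) ρ)
        = ∑' ρ : FPath S A, X'.indicator (M.cylProb σ s₀) ρ * (M.reachVal T s₀)⁻¹ := by
          rw [hind1]
      _ = (∑' ρ : FPath S A, X'.indicator (M.cylProb σ s₀) ρ) * (M.reachVal T s₀)⁻¹ :=
          ENNReal.tsum_mul_right
      _ = (∑' ρ : FPath S A, X.indicator (M.cylProb σ s₀) ρ) / M.reachVal T s₀ := by
          rw [hind2, div_eq_mul_inv]
end

section
/- For every state s ∈ S \ Bad and every action a legal at s, Val(s) ≥ ∑_{s'} (P s a)(s')·Val(s'). -/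
open scoped ENNReal NNReal Classical
open Filter

universe u v

variable {S : Type u} {A : Type v}

section Aux

open MDP

/-- `wtP` depends on the strategy only through the queried prefixes and last states. -/
lemma wtP_congr (p : S → A → S → ℝ≥0∞) (σ τ : Strat S A) (s₀ s₁ : S) :
    ∀ (rest pre₀ pre₁ : List (A × S)),
    (∀ l a, σ s₀ (pre₀ ++ l) a = τ s₁ (pre₁ ++ l) a) →
    (∀ l, lastState s₀ (pre₀ ++ l) = lastState s₁ (pre₁ ++ l)) →
    wtP p σ s₀ pre₀ rest = wtP p τ s₁ pre₁ rest
  | [], _, _, _, _ => by simp [wtP]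
  | (a, s') :: r, pre₀, pre₁, h1, h2 => by
    simp only [wtP]
    rw [show σ s₀ pre₀ a = τ s₁ pre₁ a by simpa using h1 [] a,
      show lastState s₀ pre₀ = lastState s₁ pre₁ by simpa using h2 [],
      wtP_congr p σ τ s₀ s₁ r (pre₀ ++ [(a, s')]) (pre₁ ++ [(a, s')])
        (fun l b => by simpa [List.append_assoc] using h1 ((a, s') :: l) b)
        (fun l => by simpa [List.append_assoc] using h2 ((a, s') :: l))]

/-- Default (Dirac) strategy: always play some legal action at the last state. -/
noncomputable def dfltStrat [Fintype S] [Fintype A] (M : MDP S A) : Strat S A :=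
  fun s₀ steps a' =>
    if a' = Classical.choose (M.exists_legal (lastState s₀ steps)) then 1 else 0

lemma dfltStrat_isStrategy [Fintype S] [Fintype A] (M : MDP S A) :
    M.IsStrategy (dfltStrat M) := by
  intro s steps _
  constructor
  · simp [dfltStrat]
  · intro a hpos
    have : a = Classical.choose (M.exists_legal (lastState s steps)) := by
      by_contra h
      simp [dfltStrat, h] at hpos
    rw [this]
    exact Classical.choose_spec (M.exists_legal (lastState s steps))

instance stratNonempty [Fintype S] [Fintype A] (M : MDP S A) :
    Nonempty {σ : Strat S A // M.IsStrategy σ} :=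
  ⟨⟨dfltStrat M, dfltStrat_isStrategy M⟩⟩

/-- Finite sums of suprema are bounded by a supremum over choice functions. -/
lemma finsetSum_iSup_le {ι : Type*} {κ : Type*} [Nonempty κ] (t : Finset ι)
    (f : ι → κ → ℝ≥0∞) :
    (∑ i ∈ t, ⨆ k, f i k) ≤ ⨆ g : ι → κ, ∑ i ∈ t, f i (g i) := by
  classical
  induction t using Finset.induction with
  | empty => simp
  | @insert j t hj ih =>
    rw [Finset.sum_insert hj]
    calc (⨆ k, f j k) + ∑ i ∈ t, ⨆ k, f i k
        ≤ (⨆ k, f j k) + ⨆ g : ι → κ, ∑ i ∈ t, f i (g i) := add_le_add le_rfl ih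
      _ = ⨆ k, ⨆ g : ι → κ, (f j k + ∑ i ∈ t, f i (g i)) := by
          rw [ENNReal.iSup_add]
          exact iSup_congr fun k => ENNReal.add_iSup _
      _ ≤ ⨆ g : ι → κ, ∑ i ∈ insert j t, f i (g i) := by
          refine iSup_le fun k => iSup_le fun g => ?_
          refine le_iSup_of_le (Function.update g j k) ?_
          rw [Finset.sum_insert hj, Function.update_self]
          gcongr with i hi
          rw [Function.update_of_ne (by rintro rfl; exact hj hi)]

variable [Fintype S] [Fintype A]

/-- The combined strategy: play `a` first, then follow `g s'` from the reached state. -/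
noncomputable def combStrat (s : S) (a : A) (g : S → Strat S A) : Strat S A :=
  fun s₀ steps a' =>
    match steps with
    | [] => if s₀ = s then (if a' = a then 1 else 0) else g s₀ s₀ [] a'
    | p :: rest => if s₀ = s then g p.2 p.2 rest a' else g s₀ s₀ (p :: rest) a'

lemma combStrat_isStrategy (M : MDP S A) (s : S) (a : A) (ha : M.legal s a)
    (g : S → Strat S A) (hg : ∀ s', M.IsStrategy (g s')) :
    M.IsStrategy (combStrat s a g) := by
  intro s₀ steps hpath
  by_cases h : s₀ = s
  · subst h
    cases steps with
    | nil =>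
      constructor
      · simp [combStrat]
      · intro a' hpos
        have : a' = a := by
          by_contra hne
          simp [combStrat, hne] at hpos
        rw [this]; exact ha
    | cons p rest =>
      obtain ⟨_, _, hrest⟩ := hpath
      have := hg p.2 p.2 rest hrest
      exact ⟨by simpa [combStrat] using this.1, fun a' hpos => this.2 a' (by simpa [combStrat] using hpos)⟩
  · have := hg s₀ s₀ steps hpath
    cases steps with
    | nil => exact ⟨by simpa [combStrat, h] using this.1,
        fun a' hpos => this.2 a' (by simpa [combStrat, h] using hpos)⟩
    | cons p rest => exact ⟨by simpa [combStrat, h] using this.1,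
        fun a' hpos => this.2 a' (by simpa [combStrat, h] using hpos)⟩

/-- Key lemma: playing `a` then a family of strategies is dominated by the value. -/
lemma key_combine (M : MDP S A) (Bad : Set S) (s : S) (hs : s ∉ Bad) (a : A)
    (ha : M.legal s a) (g : S → Strat S A) (hg : ∀ s', M.IsStrategy (g s')) :
    (∑ s' : S, M.prob s a s' * M.prSafe (g s') s' Bad) ≤ M.safeVal Bad s := by
  classical
  set σ : Strat S A := combStrat s a g with hσdef
  have hσ : M.IsStrategy σ := combStrat_isStrategy M s a ha g hg
  -- cylinder probability decomposition
  have hcyl : ∀ (s' : S) (ρ' : FPath S A), ρ'.start = s' →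
      M.cylProb σ s ⟨s, (a, s') :: ρ'.steps⟩ = M.prob s a s' * M.cylProb (g s') s' ρ' := by
    intro s' ρ' hst
    have hwt : wtP M.prob σ s [(a, s')] ρ'.steps = wtP M.prob (g s') s' [] ρ'.steps := by
      refine wtP_congr M.prob σ (g s') s s' ρ'.steps [(a, s')] [] ?_ ?_
      · intro l b; simp [hσdef, combStrat]
      · intro l; rfl
    have hlhs : M.cylProb σ s ⟨s, (a, s') :: ρ'.steps⟩
        = σ s [] a * M.prob s a s' * wtP M.prob σ s [(a, s')] ρ'.steps := by
      simp only [MDP.cylProb, cylProbP, if_pos rfl]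
      simp [wtP, lastState]
    have hσa : σ s [] a = 1 := by simp [hσdef, combStrat]
    rw [hlhs, hσa, one_mul, hwt]
    simp only [MDP.cylProb, cylProbP, if_pos hst]
    rw [← hst]
  -- the step inequality
  have hstep : ∀ n : ℕ, (∑ s' : S, M.prob s a s' * M.safeN (g s') s' Bad n)
      ≤ M.safeN σ s Bad (n + 1) := by
    intro n
    set Q : Set (FPath S A) := {ρ | M.IsPath ρ ∧ ρ.start = s ∧ ρ.length = n + 1 ∧
      ∀ x ∈ ρ.states, x ∉ Bad} with hQ
    have hRHS : M.safeN σ s Bad (n + 1) = ∑' ρ : FPath S A, Q.indicator (M.cylProb σ s) ρ :=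
      tsum_subtype Q (M.cylProb σ s)
    let T : S → Type _ := fun s' => {ρ : FPath S A // M.IsPath ρ ∧ ρ.start = s' ∧
      ρ.length = n ∧ ∀ x ∈ ρ.states, x ∉ Bad}
    let emb : (Σ s' : S, T s') → FPath S A := fun z => ⟨s, (a, z.1) :: z.2.1.steps⟩
    have hinj : Function.Injective emb := by
      rintro ⟨z1, ⟨⟨st₁, sp₁⟩, hz⟩⟩ ⟨w1, ⟨⟨st₂, sp₂⟩, hw⟩⟩ h
      have h' : ((a, z1) :: sp₁ : List (A × S)) = (a, w1) :: sp₂ := congrArg FPath.steps h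
      injection h' with hpair hrest
      injection hpair with _ h1
      subst h1
      have : st₁ = st₂ := hz.2.1.trans hw.2.1.symm
      subst this; subst hrest; rfl
    have h3 : ∀ z : Σ s' : S, T s',
        M.prob s a z.1 * M.cylProb (g z.1) z.1 z.2.1 ≤ Q.indicator (M.cylProb σ s) (emb z) := by
      rintro ⟨s', ⟨ρ', hρ'⟩⟩
      obtain ⟨hp', hst', hlen', hav'⟩ := hρ'
      rcases eq_zero_or_pos (M.prob s a s') with hz | hp
      · simp [hz]
      · have hmem : emb ⟨s', ⟨ρ', ⟨hp', hst', hlen', hav'⟩⟩⟩ ∈ Q := by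
          refine ⟨⟨ha, hp, ?_⟩, rfl, ?_, ?_⟩
          · simpa only [MDP.IsPath, hst'] using hp'
          · have hl : ρ'.steps.length = n := hlen'
            simp [emb, FPath.length, hl]
          · intro x hx
            simp only [emb, FPath.states, List.map_cons, List.mem_cons] at hx
            rcases hx with rfl | hx
            · exact hs
            · refine hav' x ?_
              have : ρ'.states = ρ'.start :: ρ'.steps.map Prod.snd := rfl
              rw [this, hst']
              simpa using hx
        rw [Set.indicator_of_mem hmem]
        exact le_of_eq (hcyl s' ρ' hst').symm
    calc (∑ s' : S, M.prob s a s' * M.safeN (g s') s' Bad n)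
        = ∑' s' : S, M.prob s a s' * M.safeN (g s') s' Bad n := (tsum_fintype _).symm
      _ = ∑' (s' : S) (ρ' : T s'), M.prob s a s' * M.cylProb (g s') s' ρ'.1 := by
          refine tsum_congr fun s' => ?_
          rw [MDP.safeN, ← ENNReal.tsum_mul_left]
      _ = ∑' z : Σ s' : S, T s', M.prob s a z.1 * M.cylProb (g z.1) z.1 z.2.1 :=
          (ENNReal.tsum_sigma'
            (fun z : Σ s' : S, T s' => M.prob s a z.1 * M.cylProb (g z.1) z.1 z.2.1)).symm
      _ ≤ ∑' z : Σ s' : S, T s', Q.indicator (M.cylProb σ s) (emb z) :=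
          ENNReal.tsum_le_tsum h3
      _ ≤ ∑' ρ : FPath S A, Q.indicator (M.cylProb σ s) ρ :=
          ENNReal.tsum_comp_le_tsum_of_injective hinj _
      _ = M.safeN σ s Bad (n + 1) := hRHS.symm
  -- base bounds
  have h0 : (1 : ℝ≥0∞) ≤ M.safeN σ s Bad 0 := by
    have hmem : M.IsPath (⟨s, []⟩ : FPath S A) ∧ (⟨s, []⟩ : FPath S A).start = s ∧
        (⟨s, []⟩ : FPath S A).length = 0 ∧
        ∀ x ∈ (⟨s, []⟩ : FPath S A).states, x ∉ Bad := by
      refine ⟨trivial, rfl, rfl, ?_⟩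
      intro x hx
      simp [FPath.states] at hx
      subst hx; exact hs
    have := ENNReal.le_tsum (f := fun ρ : {ρ : FPath S A // M.IsPath ρ ∧ ρ.start = s ∧
      ρ.length = 0 ∧ ∀ x ∈ ρ.states, x ∉ Bad} => M.cylProb σ s ρ.1) ⟨⟨s, []⟩, hmem⟩
    calc (1 : ℝ≥0∞) = M.cylProb σ s ⟨s, []⟩ := by
          simp [MDP.cylProb, cylProbP, wtP]
      _ ≤ M.safeN σ s Bad 0 := this
  have h1 : ∀ (σ' : Strat S A) (s' : S), M.safeN σ' s' Bad 0 ≤ 1 := by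
    intro σ' s'
    rw [MDP.safeN]
    rcases isEmpty_or_nonempty {ρ : FPath S A // M.IsPath ρ ∧ ρ.start = s' ∧
        ρ.length = 0 ∧ ∀ x ∈ ρ.states, x ∉ Bad} with hemp | ⟨⟨ρ₀, hρ₀⟩⟩
    · rw [tsum_empty]; exact zero_le_one
    · have huniq : ∀ b : {ρ : FPath S A // M.IsPath ρ ∧ ρ.start = s' ∧
          ρ.length = 0 ∧ ∀ x ∈ ρ.states, x ∉ Bad}, b = ⟨ρ₀, hρ₀⟩ := by
        rintro ⟨⟨st, sp⟩, hb⟩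
        obtain ⟨⟨st₀, sp₀⟩, h₀⟩ := And.intro hρ₀ trivial
        have e1 : sp = [] := List.length_eq_zero_iff.mp hb.2.2.1
        have e2 : ρ₀.steps = [] := List.length_eq_zero_iff.mp hρ₀.2.2.1
        have e3 : st = s' := hb.2.1
        have e4 : ρ₀.start = s' := hρ₀.2.1
        have : (⟨st, sp⟩ : FPath S A) = ρ₀ := by
          cases ρ₀
          simp_all
        exact Subtype.ext this
      rw [tsum_eq_single ⟨ρ₀, hρ₀⟩ (fun b hb => absurd (huniq b) hb)]
      have e2 : ρ₀.steps = [] := List.length_eq_zero_iff.mp hρ₀.2.2.1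
      simp [MDP.cylProb, cylProbP, hρ₀.2.1, e2, wtP]
  have hsum1 : (∑ s' : S, M.prob s a s') = 1 := by
    obtain ⟨d, hd⟩ := Option.isSome_iff_exists.mp ha
    have hp : ∀ s', M.prob s a s' = (d s' : ℝ≥0∞) := by
      intro s'; simp [MDP.prob, hd]
    simp only [hp]
    rw [← ENNReal.coe_finset_sum, M.sum_one s a d hd, ENNReal.coe_one]
  have hfin : ∀ n : ℕ, (∑ s' : S, M.prob s a s' * M.prSafe (g s') s' Bad)
      ≤ M.safeN σ s Bad n := by
    intro n
    cases n with
    | zero =>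
      calc (∑ s' : S, M.prob s a s' * M.prSafe (g s') s' Bad)
          ≤ ∑ s' : S, M.prob s a s' * 1 := by
            gcongr with s' _
            exact le_trans (iInf_le _ 0) (h1 (g s') s')
        _ = 1 := by simpa using hsum1
        _ ≤ M.safeN σ s Bad 0 := h0
    | succ n =>
      refine le_trans ?_ (hstep n)
      gcongr with s' _
      exact iInf_le _ n
  calc (∑ s' : S, M.prob s a s' * M.prSafe (g s') s' Bad)
      ≤ M.prSafe σ s Bad := le_iInf hfin
    _ ≤ M.safeVal Bad s := le_iSup₂ (f := fun σ' (_ : M.IsStrategy σ') => M.prSafe σ' s Bad) σ hσ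

end Aux

/-- for every `s ∈ S \ Bad` and every action `a` legal at `s`,
`Val(s) ≥ ∑_{s'} (P s a)(s')·Val(s')` (safety value). -/
theorem stmt7 {S : Type u} {A : Type v} [Fintype S] [Fintype A] [Nonempty S] [Nonempty A]
    (M : MDP S A) (Bad : Set S) (hBad : M.SinkSet Bad)
    (s : S) (hs : s ∉ Bad) (a : A) (ha : M.legal s a) :
    (∑ s' : S, M.prob s a s' * M.safeVal Bad s') ≤ M.safeVal Bad s := by
  classical
  have hrw : ∀ s' : S, M.safeVal Bad s'
      = ⨆ σ' : {σ' : Strat S A // M.IsStrategy σ'}, M.prSafe σ'.1 s' Bad := by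
    intro s'
    rw [MDP.safeVal, iSup_subtype']
  haveI : Nonempty {σ' : Strat S A // M.IsStrategy σ'} := stratNonempty M
  calc (∑ s' : S, M.prob s a s' * M.safeVal Bad s')
      = ∑ s' : S, ⨆ σ' : {σ' : Strat S A // M.IsStrategy σ'},
          M.prob s a s' * M.prSafe σ'.1 s' Bad := by
        refine Finset.sum_congr rfl fun s' _ => ?_
        rw [hrw, ENNReal.mul_iSup]
    _ ≤ ⨆ g : S → {σ' : Strat S A // M.IsStrategy σ'},
          ∑ s' : S, M.prob s a s' * M.prSafe ((g s').1) s' Bad :=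
        finsetSum_iSup_le _ _
    _ ≤ M.safeVal Bad s := by
        refine iSup_le fun g => ?_
        exact key_combine M Bad s hs a ha (fun s' => (g s').1) (fun s' => (g s').2)
end
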